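/- Let Q be a routing matrix and let (e, f, u) be a fluid model solution with (e(0), f(0)) ∈ 𝒯. Let L⁺ ⊆ 𝒯 be the set of positive limit points of the trajectory, i.e. L⁺ = {p ∈ 𝒯 : there exists a sequence t_n → ∞ with (e(t_n), f(t_n)) → p}. Then: (i) L⁺ is nonempty and compact; (ii) L⁺ is positively invariant, i.e. for every fluid model solution (ẽ, f̃, ũ) with (ẽ(0), f̃(0)) ∈ L⁺ one has (ẽ(t), f̃(t)) ∈ L⁺ for all t ≥ 0; and (iii) lim_{t→∞} inf_{x ∈ L⁺} |(e(t), f(t)) − x| = 0, where |·| denotes the entrywise maximum norm. -/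

import Mathlib

open Finset Filter Topology MeasureTheory intervalIntegral

abbrev Mat (r : ℕ) := Fin r → Fin r → ℝ

structure NetParams (r : ℕ) where
  lam : Fin r → ℝ
  mu : Mat r
  P : Mat r
  lam_pos : ∀ i, 0 < lam i
  mu_pos : ∀ i j, 0 < mu i j
  P_nonneg : ∀ i j, 0 ≤ P i j
  P_rowsum : ∀ i, ∑ j, P i j = 1

def IsRouting {r : ℕ} (q : Mat r) : Prop :=
  (∀ i j, 0 ≤ q i j) ∧ ∀ i, ∑ j, q i j = 1

def MemT {r : ℕ} (e f : Mat r) : Prop :=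
  (∀ i j, e i j ∈ Set.Icc (0:ℝ) 1) ∧ (∀ i j, f i j ∈ Set.Icc (0:ℝ) 1) ∧
    (∑ i, ∑ j, (e i j + f i j)) = 1

open scoped Classical in
/-- The Lebesgue–Stieltjes measure associated with a non-decreasing `g : ℝ → ℝ`
(junk value `0` if `g` is not monotone). -/
noncomputable def lsMeasure (g : ℝ → ℝ) : Measure ℝ :=
  if h : Monotone g then h.stieltjesFunction.measure else 0

/-- A fluid model solution `(e, f, u)` for the ridesharing network with static
routing matrix `Q`.  All functions are defined on `ℝ`, but only their values
on `[0, ∞)` are relevant; `u` is extended by `0` on `(-∞, 0]`. -/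
structure IsFluidSol {r : ℕ} (np : NetParams r) (Q : Mat r) (e f : ℝ → Mat r)
    (u : ℝ → Fin r → ℝ) : Prop where
  cont_e : ∀ i j, ContinuousOn (fun t => e t i j) (Set.Ici 0)
  cont_f : ∀ i j, ContinuousOn (fun t => f t i j) (Set.Ici 0)
  mem_T : ∀ t, 0 ≤ t → MemT (e t) (f t)
  u_nonneg : ∀ t i, 0 ≤ u t i
  u_mono : ∀ i, Monotone fun t => u t i
  u_zero : ∀ i, ∀ t ≤ (0:ℝ), u t i = 0
  eq_f : ∀ i j, ∀ t, 0 ≤ t →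
    f t i j = f 0 i j + np.lam i * np.P i j * (t - u t i)
      - np.mu i j * ∫ s in (0:ℝ)..t, f s i j
  eq_e_off : ∀ i j, i ≠ j → ∀ t, 0 ≤ t →
    e t i j = e 0 i j - np.mu i j * (∫ s in (0:ℝ)..t, e s i j)
      + Q i j * ∑ k, np.mu k i * ∫ s in (0:ℝ)..t, f s k i
  eq_e_diag : ∀ i, ∀ t, 0 ≤ t →
    e t i i = e 0 i i - np.lam i * (t - u t i)
      + (∑ j ∈ Finset.univ.filter (fun j => j ≠ i), np.mu j i * ∫ s in (0:ℝ)..t, e s j i)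
      + Q i i * ∑ j, np.mu j i * ∫ s in (0:ℝ)..t, f s j i
  compl : ∀ i, ∫⁻ s in Set.Ici (0:ℝ),
      ENNReal.ofReal (e s i i) ∂(lsMeasure fun t => u t i) = 0

open scoped Classical in
/-- The equilibrium set ℰ associated to the routing matrix `Q`. -/
noncomputable def eqSet {r : ℕ} (np : NetParams r) (Q : Mat r) : Set (Mat r × Mat r) :=
  {p | MemT p.1 p.2 ∧ ∃ a : Fin r → ℝ, (∀ i, 0 ≤ a i ∧ a i ≤ 1) ∧
    (∀ i j, np.lam i * np.P i j * a i = np.mu i j * p.2 i j) ∧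
    (∀ i j, i ≠ j → np.mu i j * p.1 i j = Q i j * ∑ k, np.mu k i * p.2 k i) ∧
    (∀ i, np.lam i * a i =
      (∑ k ∈ Finset.univ.filter (fun k => k ≠ i), np.mu k i * p.1 k i)
        + Q i i * ∑ k, np.mu k i * p.2 k i) ∧
    (∀ i, (1 - a i) * p.1 i i = 0)}

/-- The set `L⁺` of positive limit points of the trajectory `t ↦ (e(t), f(t))`. -/
def posLimitSet {r : ℕ} (e f : ℝ → Mat r) : Set (Mat r × Mat r) :=
  {p | ∃ tn : ℕ → ℝ, Tendsto tn atTop atTop ∧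
    Tendsto (fun n => (e (tn n), f (tn n))) atTop (𝓝 p)}

section Helpers
variable {r : ℕ} {np : NetParams r} {Q : Mat r} {e f : ℝ → Mat r} {u : ℝ → Fin r → ℝ}

lemma intInt {g : ℝ → ℝ} (hg : ContinuousOn g (Set.Ici 0)) {a b : ℝ} (ha : 0 ≤ a) (hb : 0 ≤ b) :
    IntervalIntegrable g MeasureTheory.volume a b :=
  (hg.mono (fun _ hx => le_trans (le_min ha hb) hx.1)).intervalIntegrable

lemma contPrim {g : ℝ → ℝ} (hg : ContinuousOn g (Set.Ici 0)) :
    ContinuousOn (fun t => ∫ s in (0:ℝ)..t, g s) (Set.Ici 0) := by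
  intro t0 ht0
  have ht0' : (0:ℝ) ≤ t0 := ht0
  have hI : Set.uIcc (0:ℝ) (t0+1) = Set.Icc 0 (t0+1) := Set.uIcc_of_le (by linarith)
  have h1 : ContinuousOn (fun t => ∫ s in (0:ℝ)..t, g s) (Set.uIcc 0 (t0+1)) := by
    apply continuousOn_primitive_interval
    rw [hI]
    exact (hg.mono (fun x hx => hx.1)).integrableOn_compact isCompact_Icc
  rw [hI] at h1
  have hmem : Set.Icc (0:ℝ) (t0+1) ∈ 𝓝[Set.Ici 0] t0 := by
    rw [show Set.Icc (0:ℝ) (t0+1) = Set.Ici 0 ∩ Set.Iic (t0+1) by rw [Set.Ici_inter_Iic]]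
    exact Filter.inter_mem self_mem_nhdsWithin
      (nhdsWithin_le_nhds (Iic_mem_nhds (by linarith)))
  exact (h1.continuousWithinAt ⟨ht0', by linarith⟩).mono_of_mem_nhdsWithin hmem

lemma u_cont (hsol : IsFluidSol np Q e f u) (i : Fin r) :
    ContinuousOn (fun t => u t i) (Set.Ici 0) := by
  -- pick j with P i j > 0
  obtain ⟨j, hj⟩ : ∃ j, 0 < np.P i j := by
    by_contra h
    push_neg at h
    have : ∑ j, np.P i j = 0 :=
      Finset.sum_eq_zero fun j _ => le_antisymm (h j) (np.P_nonneg i j)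
    rw [np.P_rowsum i] at this; norm_num at this
  have hlp : 0 < np.lam i * np.P i j := mul_pos (np.lam_pos i) hj
  have : ∀ t ∈ Set.Ici (0:ℝ), u t i =
      t - (f t i j - f 0 i j + np.mu i j * ∫ s in (0:ℝ)..t, f s i j) / (np.lam i * np.P i j) := by
    intro t ht
    have := hsol.eq_f i j t ht
    rw [eq_sub_iff_add_eq, add_div' _ _ _ hlp.ne', div_eq_iff hlp.ne']
    linear_combination this
  apply ContinuousOn.congr ?_ this
  apply (continuousOn_id' _).sub
  apply ContinuousOn.div_const
  exact (((hsol.cont_f i j).sub continuousOn_const).add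
    (continuousOn_const.mul (contPrim (hsol.cont_f i j))))

lemma u_rightLim (hsol : IsFluidSol np Q e f u) (i : Fin r) {x : ℝ} (hx : 0 ≤ x) :
    Function.rightLim (fun t => u t i) x = u x i := by
  apply rightLim_eq_of_tendsto
  exact (u_cont hsol i x hx).mono_left
    (nhdsWithin_mono x (fun y hy => le_of_lt (lt_of_le_of_lt hx hy)))

/-- Complementarity: if `e · i i > 0` on `(a, b]` with `0 ≤ a`, then `u` is constant there. -/
lemma compl' (hsol : IsFluidSol np Q e f u) (i : Fin r) {a b : ℝ} (ha : 0 ≤ a) (hab : a ≤ b)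
    (hpos : ∀ τ ∈ Set.Ioc a b, 0 < e τ i i) : u b i = u a i := by
  by_contra hne
  have hmono := hsol.u_mono i
  have hlt : u a i < u b i := lt_of_le_of_ne (hmono hab) (Ne.symm hne)
  set μ := lsMeasure (fun t => u t i) with hμ
  have hμdef : μ = hmono.stieltjesFunction.measure := by
    rw [hμ, lsMeasure, dif_pos hmono]
  have hIoc : μ (Set.Ioc a b) = ENNReal.ofReal (u b i - u a i) := by
    rw [hμdef, StieltjesFunction.measure_Ioc]
    congr 1
    rw [Monotone.stieltjesFunction_eq, Monotone.stieltjesFunction_eq,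
      u_rightLim hsol i ha, u_rightLim hsol i (le_trans ha hab)]
  have hμpos : 0 < μ (Set.Ioc a b) := by
    rw [hIoc]; exact ENNReal.ofReal_pos.2 (by linarith)
  have hsub : Set.Ioc a b ⊆ Set.Ici (0:ℝ) := fun τ hτ => le_of_lt (lt_of_le_of_lt ha hτ.1)
  have hzero : ∫⁻ s in Set.Ioc a b, ENNReal.ofReal (e s i i) ∂μ = 0 := by
    refine le_antisymm (le_trans (MeasureTheory.lintegral_mono_set hsub) ?_) zero_le
    rw [hsol.compl i]
  have haem : AEMeasurable (fun s => ENNReal.ofReal (e s i i)) (μ.restrict (Set.Ioc a b)) := by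
    refine ENNReal.measurable_ofReal.comp_aemeasurable ?_
    exact ((hsol.cont_e i i).mono hsub).aemeasurable measurableSet_Ioc
  have hae := (MeasureTheory.lintegral_eq_zero_iff' haem).1 hzero
  -- but ofReal (e s i i) > 0 on Ioc a b
  have : μ.restrict (Set.Ioc a b) {s | ENNReal.ofReal (e s i i) ≠ 0} = 0 := hae
  have hsubset : Set.Ioc a b ⊆ {s | ENNReal.ofReal (e s i i) ≠ 0} := by
    intro τ hτ
    simp only [Set.mem_setOf_eq, ne_eq, ENNReal.ofReal_eq_zero, not_le]
    exact hpos τ hτ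
  have : μ.restrict (Set.Ioc a b) (Set.Ioc a b) = 0 :=
    le_antisymm (le_trans (measure_mono hsubset) this.le) zero_le
  rw [MeasureTheory.Measure.restrict_apply_self] at this
  exact absurd this hμpos.ne'

/-- Hard direction of the Skorokhod-map characterization. -/
lemma skor {lam : ℝ} (hlam : 0 < lam) {z x w : ℝ → ℝ} {s t : ℝ} (hs : s ≤ t)
    (hw_mono : Monotone w) (hw_cont : ContinuousOn w (Set.Icc s t))
    (hz : ∀ ρ ∈ Set.Icc s t, z ρ = x ρ + lam * (w ρ - w s))
    (hz0 : ∀ ρ ∈ Set.Icc s t, 0 ≤ z ρ)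
    (hcompl : ∀ a, s ≤ a → a ≤ t → (∀ τ ∈ Set.Ioc a t, 0 < z τ) → w t = w a)
    {M : ℝ} (hM : 0 ≤ M) (hxM : ∀ ρ ∈ Set.Icc s t, -x ρ ≤ M) :
    lam * (w t - w s) ≤ M := by
  by_contra hgt
  push_neg at hgt
  set S := Set.Icc s t ∩ {ρ | lam * (w ρ - w s) ≤ M} with hS
  have hSne : S.Nonempty := ⟨s, ⟨le_refl s, hs⟩, by simp [hM]⟩
  have hSbdd : BddAbove S := ⟨t, fun ρ hρ => hρ.1.2⟩
  have hSclosed : IsClosed S := by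
    have : ContinuousOn (fun ρ => lam * (w ρ - w s)) (Set.Icc s t) :=
      continuousOn_const.mul (hw_cont.sub continuousOn_const)
    exact this.preimage_isClosed_of_isClosed isClosed_Icc isClosed_Iic
  set a := sSup S with ha
  have haS : a ∈ S := hSclosed.csSup_mem hSne hSbdd
  have hat : a ≤ t := haS.1.2
  have hsa : s ≤ a := haS.1.1
  have hposz : ∀ τ ∈ Set.Ioc a t, 0 < z τ := by
    intro τ hτ
    have hτmem : τ ∈ Set.Icc s t := ⟨le_trans hsa hτ.1.le, hτ.2⟩
    have hτS : τ ∉ S := fun h => absurd (le_csSup hSbdd h) (not_le.2 hτ.1)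
    have : M < lam * (w τ - w s) := by
      by_contra h
      exact hτS ⟨hτmem, not_lt.1 h⟩
    have := hz τ hτmem
    nlinarith [hxM τ hτmem]
  have := hcompl a hsa hat hposz
  rw [this] at hgt
  exact absurd haS.2 (not_le.2 hgt)

lemma split_int {g : ℝ → ℝ} (hg : ContinuousOn g (Set.Ici 0)) {s t : ℝ} (hs : 0 ≤ s)
    (ht : 0 ≤ t) :
    (∫ σ in (0:ℝ)..(s+t), g σ) = (∫ σ in (0:ℝ)..s, g σ) + ∫ σ in (0:ℝ)..t, g (s+σ) := by
  have h1 : (∫ σ in (0:ℝ)..t, g (s+σ)) = ∫ σ in (s+0)..(s+t), g σ :=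
    intervalIntegral.integral_comp_add_left g s
  rw [h1, add_zero]
  rw [intervalIntegral.integral_add_adjacent_intervals (intInt hg le_rfl hs)
    (intInt hg hs (by linarith))]

lemma shift_f (hsol : IsFluidSol np Q e f u) (i j : Fin r) {s t : ℝ} (hs : 0 ≤ s) (ht : 0 ≤ t) :
    f (s+t) i j = f s i j + np.lam i * np.P i j * (t - (u (s+t) i - u s i))
      - np.mu i j * ∫ σ in (0:ℝ)..t, f (s+σ) i j := by
  have h1 := hsol.eq_f i j (s+t) (by linarith)
  have h2 := hsol.eq_f i j s hs
  have h3 := split_int (hsol.cont_f i j) hs ht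
  rw [h3] at h1
  nlinarith [h1, h2]

lemma shift_e_off (hsol : IsFluidSol np Q e f u) {i j : Fin r} (hij : i ≠ j) {s t : ℝ}
    (hs : 0 ≤ s) (ht : 0 ≤ t) :
    e (s+t) i j = e s i j - np.mu i j * (∫ σ in (0:ℝ)..t, e (s+σ) i j)
      + Q i j * ∑ k, np.mu k i * ∫ σ in (0:ℝ)..t, f (s+σ) k i := by
  have h1 := hsol.eq_e_off i j hij (s+t) (by linarith)
  have h2 := hsol.eq_e_off i j hij s hs
  rw [split_int (hsol.cont_e i j) hs ht] at h1
  have h4 : ∀ k : Fin r, (∫ σ in (0:ℝ)..(s+t), f σ k i)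
      = (∫ σ in (0:ℝ)..s, f σ k i) + ∫ σ in (0:ℝ)..t, f (s+σ) k i :=
    fun k => split_int (hsol.cont_f k i) hs ht
  simp_rw [h4, mul_add, Finset.sum_add_distrib, mul_add] at h1
  linarith [h1, h2]

lemma shift_e_diag (hsol : IsFluidSol np Q e f u) (i : Fin r) {s t : ℝ}
    (hs : 0 ≤ s) (ht : 0 ≤ t) :
    e (s+t) i i = (e s i i - np.lam i * t
      + (∑ j ∈ Finset.univ.filter (fun j => j ≠ i), np.mu j i * ∫ σ in (0:ℝ)..t, e (s+σ) j i)
      + Q i i * ∑ j, np.mu j i * ∫ σ in (0:ℝ)..t, f (s+σ) j i)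
      + np.lam i * (u (s+t) i - u s i) := by
  have h1 := hsol.eq_e_diag i (s+t) (by linarith)
  have h2 := hsol.eq_e_diag i s hs
  have h4 : ∀ k : Fin r, (∫ σ in (0:ℝ)..(s+t), f σ k i)
      = (∫ σ in (0:ℝ)..s, f σ k i) + ∫ σ in (0:ℝ)..t, f (s+σ) k i :=
    fun k => split_int (hsol.cont_f k i) hs ht
  have h5 : ∀ k : Fin r, (∫ σ in (0:ℝ)..(s+t), e σ k i)
      = (∫ σ in (0:ℝ)..s, e σ k i) + ∫ σ in (0:ℝ)..t, e (s+σ) k i :=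
    fun k => split_int (hsol.cont_e k i) hs ht
  simp_rw [h4, h5, mul_add, Finset.sum_add_distrib, mul_add] at h1
  linarith [h1, h2]

/-- Grönwall for the integral inequality form. -/
lemma gron {v : ℝ → ℝ} (hv : ContinuousOn v (Set.Ici 0)) (hv0 : ∀ τ, 0 ≤ v τ)
    {A B : ℝ} (hA : 0 ≤ A) (hB : 0 < B)
    (h : ∀ t, 0 ≤ t → v t ≤ A + B * ∫ σ in (0:ℝ)..t, v σ) :
    ∀ t, 0 ≤ t → v t ≤ A * Real.exp (B * t) := by
  intro t ht
  set v2 : ℝ → ℝ := fun τ => v (max τ 0) with hv2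
  have hv2c : Continuous v2 :=
    hv.comp_continuous (continuous_id.max continuous_const) (fun τ => le_max_right τ 0)
  have heq : ∀ x, 0 ≤ x → (∫ σ in (0:ℝ)..x, v2 σ) = ∫ σ in (0:ℝ)..x, v σ := by
    intro x hx
    apply intervalIntegral.integral_congr
    intro σ hσ
    rw [Set.uIcc_of_le hx] at hσ
    simp [hv2, max_eq_left hσ.1]
  set φ : ℝ → ℝ := fun τ => ∫ σ in (0:ℝ)..τ, v2 σ with hφ
  have hφd : ∀ x, HasDerivAt φ (v2 x) x := by
    intro x
    exact intervalIntegral.integral_hasDerivAt_right (hv2c.intervalIntegrable 0 x)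
      (hv2c.stronglyMeasurable.stronglyMeasurableAtFilter) hv2c.continuousAt
  have hφ0 : ∀ x, 0 ≤ φ x → True := fun _ _ => trivial
  have key : ∀ x ∈ Set.Icc (0:ℝ) t, ‖φ x‖ ≤ gronwallBound 0 B A (x - 0) := by
    apply norm_le_gronwallBound_of_norm_deriv_right_le
    · exact fun x _ => (hφd x).continuousAt.continuousWithinAt
    · exact fun x _ => (hφd x).hasDerivWithinAt
    · simp [hφ]
    · intro x hx
      have hx0 : (0:ℝ) ≤ x := hx.1
      have hφx : 0 ≤ φ x := by
        rw [hφ]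
        apply intervalIntegral.integral_nonneg hx0 (fun σ _ => hv0 _)
      rw [Real.norm_eq_abs, Real.norm_eq_abs, abs_of_nonneg (hv0 _), abs_of_nonneg hφx]
      calc v2 x = v x := by simp [hv2, max_eq_left hx0]
        _ ≤ A + B * ∫ σ in (0:ℝ)..x, v σ := h x hx0
        _ = B * φ x + A := by show _ = B * (∫ σ in (0:ℝ)..x, v2 σ) + A; rw [heq x hx0]; ring
  have hφt := key t ⟨ht, le_refl _⟩
  rw [Real.norm_eq_abs, gronwallBound_of_K_ne_0 hB.ne'] at hφt
  have hφt' : φ t ≤ A / B * (Real.exp (B * t) - 1) := by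
    have := le_trans (le_abs_self _) hφt
    simpa [sub_zero] using this
  have hBφ : B * φ t ≤ A * (Real.exp (B * t) - 1) := by
    have := mul_le_mul_of_nonneg_left hφt' hB.le
    calc B * φ t ≤ B * (A / B * (Real.exp (B * t) - 1)) := this
      _ = A * (Real.exp (B * t) - 1) := by field_simp
  calc v t ≤ A + B * ∫ σ in (0:ℝ)..t, v σ := h t ht
    _ = A + B * φ t := by show _ = A + B * (∫ σ in (0:ℝ)..t, v2 σ); rw [heq t ht]
    _ ≤ A + A * (Real.exp (B * t) - 1) := by linarith
    _ = A * Real.exp (B * t) := by ring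

section Key
variable {e' f' : ℝ → Mat r} {u' : ℝ → Fin r → ℝ}

/-- Continuous dependence / uniqueness estimate between a time-shifted solution and
another solution. -/
lemma key (hr : 1 ≤ r) (hQ : IsRouting Q) (hsol : IsFluidSol np Q e f u)
    (hsol' : IsFluidSol np Q e' f' u') {s : ℝ} (hs : 0 ≤ s) :
    ∀ t, 0 ≤ t →
      (∑ i, ∑ j, |f (s+t) i j - f' t i j|) + (∑ i, ∑ j, |e (s+t) i j - e' t i j|) ≤
      (4*(r:ℝ)^2 * ((∑ i, ∑ j, |f s i j - f' 0 i j|) + (∑ i, ∑ j, |e s i j - e' 0 i j|))) *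
        Real.exp ((10 * (∑ i, ∑ j, np.mu i j) * (r:ℝ)^2 + 1) * t) := by
  have hFin : Nonempty (Fin r) := Fin.pos_iff_nonempty.1 hr
  set K : ℝ := ∑ i, ∑ j, np.mu i j with hKdef
  have hK : 0 < K := Finset.sum_pos (fun i _ => Finset.sum_pos (fun j _ => np.mu_pos i j)
    Finset.univ_nonempty) Finset.univ_nonempty
  have hcol : ∀ i : Fin r, (∑ j, np.mu j i) ≤ K := by
    intro i
    apply Finset.sum_le_sum
    intro j _
    exact Finset.single_le_sum (fun k _ => (np.mu_pos j k).le) (Finset.mem_univ i)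
  have hmu_le : ∀ i j, np.mu i j ≤ K := by
    intro i j
    calc np.mu i j ≤ ∑ k, np.mu i k :=
          Finset.single_le_sum (fun k _ => (np.mu_pos i k).le) (Finset.mem_univ j)
      _ ≤ K := Finset.single_le_sum (fun k (_ : k ∈ Finset.univ) =>
          Finset.sum_nonneg (fun l _ => (np.mu_pos k l).le)) (Finset.mem_univ i)
  have hQ1 : ∀ i j, Q i j ≤ 1 := by
    intro i j
    rw [← hQ.2 i]
    exact Finset.single_le_sum (fun k _ => hQ.1 i k) (Finset.mem_univ j)
  set v : ℝ → ℝ := fun t =>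
    (∑ i, ∑ j, |f (s+t) i j - f' t i j|) + ∑ i, ∑ j, |e (s+t) i j - e' t i j| with hvdef
  have hmapsTo : Set.MapsTo (fun t => s + t) (Set.Ici 0) (Set.Ici (0:ℝ)) :=
    fun x hx => by simp only [Set.mem_Ici] at *; linarith
  have hcont_shift : Continuous (fun t : ℝ => s + t) := continuous_const.add continuous_id
  have hDf_cont : ∀ i j, ContinuousOn (fun t => f (s+t) i j - f' t i j) (Set.Ici 0) := by
    intro i j
    exact (((hsol.cont_f i j).comp hcont_shift.continuousOn hmapsTo)).sub (hsol'.cont_f i j)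
  have hDe_cont : ∀ i j, ContinuousOn (fun t => e (s+t) i j - e' t i j) (Set.Ici 0) := by
    intro i j
    exact (((hsol.cont_e i j).comp hcont_shift.continuousOn hmapsTo)).sub (hsol'.cont_e i j)
  have hv_cont : ContinuousOn v (Set.Ici 0) := by
    apply ContinuousOn.add
    · apply continuousOn_finset_sum; intro i _
      apply continuousOn_finset_sum; intro j _
      exact (hDf_cont i j).abs
    · apply continuousOn_finset_sum; intro i _
      apply continuousOn_finset_sum; intro j _
      exact (hDe_cont i j).abs
  have hv0 : ∀ τ, 0 ≤ v τ := by
    intro τ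
    apply add_nonneg <;>
      exact Finset.sum_nonneg fun i _ => Finset.sum_nonneg fun j _ => abs_nonneg _
  have hfv : ∀ τ i j, |f (s+τ) i j - f' τ i j| ≤ v τ := by
    intro τ i j
    have h1 : |f (s+τ) i j - f' τ i j| ≤ ∑ i', ∑ j', |f (s+τ) i' j' - f' τ i' j'| := by
      calc |f (s+τ) i j - f' τ i j| ≤ ∑ j', |f (s+τ) i j' - f' τ i j'| :=
            Finset.single_le_sum (f := fun j' => |f (s+τ) i j' - f' τ i j'|)
              (fun k _ => abs_nonneg _) (Finset.mem_univ j)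
        _ ≤ _ := Finset.single_le_sum
            (f := fun i' => ∑ j', |f (s+τ) i' j' - f' τ i' j'|)
            (fun k (_ : k ∈ Finset.univ) =>
            Finset.sum_nonneg fun l _ => abs_nonneg _) (Finset.mem_univ i)
    have h2 : (0:ℝ) ≤ ∑ i', ∑ j', |e (s+τ) i' j' - e' τ i' j'| :=
      Finset.sum_nonneg fun i' _ => Finset.sum_nonneg fun j' _ => abs_nonneg _
    rw [hvdef]; dsimp only; linarith
  have hev : ∀ τ i j, |e (s+τ) i j - e' τ i j| ≤ v τ := by
    intro τ i j
    have h1 : |e (s+τ) i j - e' τ i j| ≤ ∑ i', ∑ j', |e (s+τ) i' j' - e' τ i' j'| := by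
      calc |e (s+τ) i j - e' τ i j| ≤ ∑ j', |e (s+τ) i j' - e' τ i j'| :=
            Finset.single_le_sum (f := fun j' => |e (s+τ) i j' - e' τ i j'|)
              (fun k _ => abs_nonneg _) (Finset.mem_univ j)
        _ ≤ _ := Finset.single_le_sum
            (f := fun i' => ∑ j', |e (s+τ) i' j' - e' τ i' j'|)
            (fun k (_ : k ∈ Finset.univ) =>
            Finset.sum_nonneg fun l _ => abs_nonneg _) (Finset.mem_univ i)
    have h2 : (0:ℝ) ≤ ∑ i', ∑ j', |f (s+τ) i' j' - f' τ i' j'| :=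
      Finset.sum_nonneg fun i' _ => Finset.sum_nonneg fun j' _ => abs_nonneg _
    rw [hvdef]; dsimp only; linarith
  have hP1 : ∀ i j, np.P i j ≤ 1 := by
    intro i j
    rw [← np.P_rowsum i]
    exact Finset.single_le_sum (fun k _ => np.P_nonneg i k) (Finset.mem_univ j)
  have habc : ∀ a b c : ℝ, |a - b - c| ≤ |a| + |b| + |c| := by
    intro a b c
    calc |a - b - c| = |a + -b + -c| := by rw [show a - b - c = a + -b + -c by ring]
      _ ≤ |a| + |-b| + |-c| := abs_add_three _ _ _
      _ = |a| + |b| + |c| := by rw [abs_neg, abs_neg]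
  have hDf0 : ∀ i j, |f s i j - f' 0 i j| ≤ v 0 := by
    intro i j; have := hfv 0 i j; rwa [add_zero] at this
  have hDe0 : ∀ i j, |e s i j - e' 0 i j| ≤ v 0 := by
    intro i j; have := hev 0 i j; rwa [add_zero] at this
  have hv00 : 0 ≤ v 0 := hv0 0
  have hmain : ∀ t, 0 ≤ t →
      v t ≤ (4*(r:ℝ)^2 * v 0) + (10*K*(r:ℝ)^2+1) * ∫ σ in (0:ℝ)..t, v σ := by
    intro t ht
    set It : ℝ := ∫ σ in (0:ℝ)..t, v σ with hItdef
    have hItnn : 0 ≤ It := intervalIntegral.integral_nonneg ht (fun σ _ => hv0 σ)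
    have habsi : ∀ g : ℝ → ℝ, ContinuousOn g (Set.Ici 0) → (∀ ρ, 0 ≤ ρ → |g ρ| ≤ v ρ) →
        ∀ σ, 0 ≤ σ → σ ≤ t → |∫ ρ in (0:ℝ)..σ, g ρ| ≤ It := by
      intro g hg hgb σ hσ hσt
      have h1 : |∫ ρ in (0:ℝ)..σ, g ρ| ≤ ∫ ρ in (0:ℝ)..σ, |g ρ| :=
        intervalIntegral.abs_integral_le_integral_abs hσ
      have h2 : (∫ ρ in (0:ℝ)..σ, |g ρ|) ≤ ∫ ρ in (0:ℝ)..σ, v ρ := by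
        apply intervalIntegral.integral_mono_on hσ (intInt hg.abs le_rfl hσ)
          (intInt hv_cont le_rfl hσ)
        exact fun ρ hρ => hgb ρ hρ.1
      have h3 : (∫ ρ in (0:ℝ)..σ, v ρ) ≤ It := by
        rw [hItdef, ← intervalIntegral.integral_add_adjacent_intervals
          (intInt hv_cont le_rfl hσ) (intInt hv_cont hσ (le_trans hσ hσt))]
        have h4 : 0 ≤ ∫ ρ in σ..t, v ρ :=
          intervalIntegral.integral_nonneg hσt (fun ρ _ => hv0 ρ)
        linarith
      linarith
    have hintDe : ∀ (k i : Fin r), ∀ σ, 0 ≤ σ →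
        (∫ ρ in (0:ℝ)..σ, (e (s+ρ) k i - e' ρ k i)) =
          (∫ ρ in (0:ℝ)..σ, e (s+ρ) k i) - ∫ ρ in (0:ℝ)..σ, e' ρ k i := by
      intro k i σ hσ
      exact intervalIntegral.integral_sub
        (intInt ((hsol.cont_e k i).comp hcont_shift.continuousOn hmapsTo) le_rfl hσ)
        (intInt (hsol'.cont_e k i) le_rfl hσ)
    have hintDf : ∀ (k i : Fin r), ∀ σ, 0 ≤ σ →
        (∫ ρ in (0:ℝ)..σ, (f (s+ρ) k i - f' ρ k i)) =
          (∫ ρ in (0:ℝ)..σ, f (s+ρ) k i) - ∫ ρ in (0:ℝ)..σ, f' ρ k i := by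
      intro k i σ hσ
      exact intervalIntegral.integral_sub
        (intInt ((hsol.cont_f k i).comp hcont_shift.continuousOn hmapsTo) le_rfl hσ)
        (intInt (hsol'.cont_f k i) le_rfl hσ)
    have hDuDiag : ∀ i : Fin r,
        np.lam i * |(u (s+t) i - u s i) - u' t i| ≤ v 0 + 2*K*It ∧
        |e (s+t) i i - e' t i i| ≤ 2*(v 0 + 2*K*It) := by
      intro i
      have hDnn : 0 ≤ v 0 + 2*K*It := by linarith [hv00, mul_nonneg hK.le hItnn]
      set xs : ℝ → ℝ := fun σ => e s i i - np.lam i * σ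
        + (∑ j ∈ Finset.univ.filter (fun j => j ≠ i), np.mu j i * ∫ ρ in (0:ℝ)..σ, e (s+ρ) j i)
        + Q i i * ∑ j, np.mu j i * ∫ ρ in (0:ℝ)..σ, f (s+ρ) j i with hxs
      set x' : ℝ → ℝ := fun σ => e' 0 i i - np.lam i * σ
        + (∑ j ∈ Finset.univ.filter (fun j => j ≠ i), np.mu j i * ∫ ρ in (0:ℝ)..σ, e' ρ j i)
        + Q i i * ∑ j, np.mu j i * ∫ ρ in (0:ℝ)..σ, f' ρ j i with hx'
      have hzs : ∀ σ, 0 ≤ σ → e (s+σ) i i = xs σ + np.lam i * (u (s+σ) i - u s i) :=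
        fun σ hσ => shift_e_diag hsol i hs hσ
      have hz' : ∀ σ, 0 ≤ σ → e' σ i i = x' σ + np.lam i * (u' σ i) := by
        intro σ hσ
        have h := hsol'.eq_e_diag i σ hσ
        rw [hx']; dsimp only; linarith
      have hDx : ∀ σ, 0 ≤ σ → σ ≤ t → |xs σ - x' σ| ≤ v 0 + 2*K*It := by
        intro σ hσ hσt
        have hde : ∀ j : Fin r,
            |(∫ ρ in (0:ℝ)..σ, e (s+ρ) j i) - ∫ ρ in (0:ℝ)..σ, e' ρ j i| ≤ It := by
          intro j
          rw [← hintDe j i σ hσ]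
          exact habsi _ (hDe_cont j i) (fun ρ hρ => hev ρ j i) σ hσ hσt
        have hdf : ∀ j : Fin r,
            |(∫ ρ in (0:ℝ)..σ, f (s+ρ) j i) - ∫ ρ in (0:ℝ)..σ, f' ρ j i| ≤ It := by
          intro j
          rw [← hintDf j i σ hσ]
          exact habsi _ (hDf_cont j i) (fun ρ hρ => hfv ρ j i) σ hσ hσt
        have hsplit : xs σ - x' σ = (e s i i - e' 0 i i)
            + (∑ j ∈ Finset.univ.filter (fun j => j ≠ i), np.mu j i *
                ((∫ ρ in (0:ℝ)..σ, e (s+ρ) j i) - ∫ ρ in (0:ℝ)..σ, e' ρ j i))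
            + Q i i * ∑ j, np.mu j i *
                ((∫ ρ in (0:ℝ)..σ, f (s+ρ) j i) - ∫ ρ in (0:ℝ)..σ, f' ρ j i) := by
          rw [hxs, hx']; dsimp only
          simp only [mul_sub, Finset.sum_sub_distrib]
          ring
        have hB1 : |∑ j ∈ Finset.univ.filter (fun j => j ≠ i), np.mu j i *
            ((∫ ρ in (0:ℝ)..σ, e (s+ρ) j i) - ∫ ρ in (0:ℝ)..σ, e' ρ j i)| ≤ K * It := by
          calc _ ≤ ∑ j ∈ Finset.univ.filter (fun j => j ≠ i), |np.mu j i *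
              ((∫ ρ in (0:ℝ)..σ, e (s+ρ) j i) - ∫ ρ in (0:ℝ)..σ, e' ρ j i)| :=
                Finset.abs_sum_le_sum_abs _ _
            _ ≤ ∑ j ∈ Finset.univ.filter (fun j => j ≠ i), np.mu j i * It := by
                apply Finset.sum_le_sum
                intro j _
                rw [abs_mul, abs_of_pos (np.mu_pos j i)]
                exact mul_le_mul_of_nonneg_left (hde j) (np.mu_pos j i).le
            _ ≤ ∑ j, np.mu j i * It := Finset.sum_le_sum_of_subset_of_nonneg
                (Finset.filter_subset _ _)
                (fun j _ _ => mul_nonneg (np.mu_pos j i).le hItnn)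
            _ = (∑ j, np.mu j i) * It := by rw [Finset.sum_mul]
            _ ≤ K * It := mul_le_mul_of_nonneg_right (hcol i) hItnn
        have hB2 : |Q i i * ∑ j, np.mu j i *
            ((∫ ρ in (0:ℝ)..σ, f (s+ρ) j i) - ∫ ρ in (0:ℝ)..σ, f' ρ j i)| ≤ K * It := by
          rw [abs_mul, abs_of_nonneg (hQ.1 i i)]
          have h1 : |∑ j, np.mu j i *
              ((∫ ρ in (0:ℝ)..σ, f (s+ρ) j i) - ∫ ρ in (0:ℝ)..σ, f' ρ j i)| ≤ K * It := by
            calc _ ≤ ∑ j, |np.mu j i *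
                ((∫ ρ in (0:ℝ)..σ, f (s+ρ) j i) - ∫ ρ in (0:ℝ)..σ, f' ρ j i)| :=
                  Finset.abs_sum_le_sum_abs _ _
              _ ≤ ∑ j, np.mu j i * It := by
                  apply Finset.sum_le_sum
                  intro j _
                  rw [abs_mul, abs_of_pos (np.mu_pos j i)]
                  exact mul_le_mul_of_nonneg_left (hdf j) (np.mu_pos j i).le
              _ = (∑ j, np.mu j i) * It := by rw [Finset.sum_mul]
              _ ≤ K * It := mul_le_mul_of_nonneg_right (hcol i) hItnn
          have h2 := mul_le_mul_of_nonneg_right (hQ1 i i) (abs_nonneg (∑ j, np.mu j i *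
              ((∫ ρ in (0:ℝ)..σ, f (s+ρ) j i) - ∫ ρ in (0:ℝ)..σ, f' ρ j i)))
          linarith
        calc |xs σ - x' σ| ≤ |e s i i - e' 0 i i|
            + |∑ j ∈ Finset.univ.filter (fun j => j ≠ i), np.mu j i *
                ((∫ ρ in (0:ℝ)..σ, e (s+ρ) j i) - ∫ ρ in (0:ℝ)..σ, e' ρ j i)|
            + |Q i i * ∑ j, np.mu j i *
                ((∫ ρ in (0:ℝ)..σ, f (s+ρ) j i) - ∫ ρ in (0:ℝ)..σ, f' ρ j i)| := by
              rw [hsplit]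
              exact abs_add_three _ _ _
          _ ≤ v 0 + 2*K*It := by
              have := hDe0 i i
              linarith
      -- Skorokhod comparison, both directions
      have hwm : Monotone (fun ρ => u (s+ρ) i) :=
        fun a b hab => hsol.u_mono i (by linarith : s + a ≤ s + b)
      have hwc : ContinuousOn (fun ρ => u (s+ρ) i) (Set.Icc 0 t) :=
        ((u_cont hsol i).comp hcont_shift.continuousOn hmapsTo).mono
          (fun ρ hρ => hρ.1)
      have hw'c : ContinuousOn (fun ρ => u' ρ i) (Set.Icc 0 t) :=
        (u_cont hsol' i).mono (fun ρ hρ => hρ.1)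
      have hu'0 : u' 0 i = 0 := hsol'.u_zero i 0 le_rfl
      have ha : np.lam i * (u (s+t) i - u s i) ≤ np.lam i * u' t i + (v 0 + 2*K*It) := by
        have := skor (np.lam_pos i) ht hwm hwc
          (z := fun ρ => e (s+ρ) i i) (x := xs)
          (fun ρ hρ => by
            show e (s+ρ) i i = xs ρ + np.lam i * (u (s+ρ) i - u (s+0) i)
            rw [add_zero]
            exact hzs ρ hρ.1)
          (fun ρ hρ => ((hsol.mem_T (s+ρ) (by linarith [hρ.1])).1 i i).1)
          (fun a ha0 hat hpos => by
            have h1 : u (s+t) i = u (s+a) i := by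
              apply compl' hsol i (by linarith : (0:ℝ) ≤ s + a) (by linarith)
              intro τ' hτ'
              have h2 : τ' = s + (τ' - s) := by ring
              rw [h2]
              exact hpos (τ' - s) ⟨by linarith [hτ'.1], by linarith [hτ'.2]⟩
            exact h1)
          (M := np.lam i * u' t i + (v 0 + 2*K*It))
          (by linarith [mul_nonneg (np.lam_pos i).le (hsol'.u_nonneg t i), hDnn])
          (fun ρ hρ => by
            have h1 := hz' ρ hρ.1
            have h2 : 0 ≤ e' ρ i i := ((hsol'.mem_T ρ hρ.1).1 i i).1
            have h3 := (abs_le.1 (hDx ρ hρ.1 hρ.2)).1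
            have h4 : np.lam i * u' ρ i ≤ np.lam i * u' t i :=
              mul_le_mul_of_nonneg_left (hsol'.u_mono i hρ.2) (np.lam_pos i).le
            linarith)
        rw [add_zero] at this
        exact this
      have hb : np.lam i * u' t i ≤ np.lam i * (u (s+t) i - u s i) + (v 0 + 2*K*It) := by
        have := skor (np.lam_pos i) ht (hsol'.u_mono i) hw'c
          (z := fun ρ => e' ρ i i) (x := x')
          (fun ρ hρ => by
            show e' ρ i i = x' ρ + np.lam i * (u' ρ i - u' 0 i)
            rw [hu'0, sub_zero]
            exact hz' ρ hρ.1)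
          (fun ρ hρ => ((hsol'.mem_T ρ hρ.1).1 i i).1)
          (fun a ha0 hat hpos => compl' hsol' i ha0 hat hpos)
          (M := np.lam i * (u (s+t) i - u s i) + (v 0 + 2*K*It))
          (by
            have h1 : u s i ≤ u (s+t) i := hsol.u_mono i (by linarith)
            linarith [mul_nonneg (np.lam_pos i).le (sub_nonneg.2 h1), hDnn])
          (fun ρ hρ => by
            have h1 := hzs ρ hρ.1
            have h2 : 0 ≤ e (s+ρ) i i := ((hsol.mem_T (s+ρ) (by linarith [hρ.1])).1 i i).1
            have h3 := (abs_le.1 (hDx ρ hρ.1 hρ.2)).2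
            have h4 : np.lam i * (u (s+ρ) i - u s i) ≤ np.lam i * (u (s+t) i - u s i) :=
              mul_le_mul_of_nonneg_left (by
                have := hsol.u_mono i (by linarith [hρ.2] : s + ρ ≤ s + t)
                linarith) (np.lam_pos i).le
            linarith)
        rw [hu'0, sub_zero] at this
        exact this
      constructor
      · have h5 : |np.lam i * ((u (s+t) i - u s i) - u' t i)| ≤ v 0 + 2*K*It := by
          rw [mul_sub]
          exact abs_le.2 ⟨by linarith, by linarith⟩
        rwa [abs_mul, abs_of_pos (np.lam_pos i)] at h5
      · have h6 := hzs t ht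
        have h7 := hz' t ht
        have h8 := (abs_le.1 (hDx t ht le_rfl))
        have h9 : |np.lam i * ((u (s+t) i - u s i) - u' t i)| ≤ v 0 + 2*K*It := by
          rw [mul_sub]
          exact abs_le.2 ⟨by linarith, by linarith⟩
        have h10 := abs_le.1 h9
        rw [mul_sub] at h10
        apply abs_le.2
        constructor <;> linarith [h8.1, h8.2, h10.1, h10.2, h6, h7]
    -- entrywise bounds at time t
    have hDfb : ∀ i j, |f (s+t) i j - f' t i j| ≤ 2 * v 0 + 5*(K*It) := by
      intro i j
      have h1 := shift_f hsol i j hs ht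
      have h2 := hsol'.eq_f i j t ht
      have h3 : f (s+t) i j - f' t i j = (f s i j - f' 0 i j)
          - np.lam i * np.P i j * ((u (s+t) i - u s i) - u' t i)
          - np.mu i j * ∫ ρ in (0:ℝ)..t, (f (s+ρ) i j - f' ρ i j) := by
        rw [h1, h2, hintDf i j t ht]
        ring
      have h4 := habsi _ (hDf_cont i j) (fun ρ hρ => hfv ρ i j) t ht le_rfl
      have h5 := (hDuDiag i).1
      have h6 : |np.lam i * np.P i j * ((u (s+t) i - u s i) - u' t i)| ≤ v 0 + 2*K*It := by
        rw [abs_mul, abs_of_nonneg (mul_nonneg (np.lam_pos i).le (np.P_nonneg i j))]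
        have h7 : np.lam i * np.P i j * |(u (s+t) i - u s i) - u' t i|
            = np.P i j * (np.lam i * |(u (s+t) i - u s i) - u' t i|) := by ring
        rw [h7]
        have h7b := mul_le_mul (hP1 i j) h5
          (mul_nonneg (np.lam_pos i).le (abs_nonneg _)) zero_le_one
        linarith
      have h8 : |np.mu i j * ∫ ρ in (0:ℝ)..t, (f (s+ρ) i j - f' ρ i j)| ≤ K * It := by
        rw [abs_mul, abs_of_pos (np.mu_pos i j)]
        exact mul_le_mul (hmu_le i j) h4 (abs_nonneg _) hK.le
      calc |f (s+t) i j - f' t i j| ≤ |f s i j - f' 0 i j|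
          + |np.lam i * np.P i j * ((u (s+t) i - u s i) - u' t i)|
          + |np.mu i j * ∫ ρ in (0:ℝ)..t, (f (s+ρ) i j - f' ρ i j)| := by
            rw [h3]; exact habc _ _ _
        _ ≤ 2 * v 0 + 5*(K*It) := by
            linarith [h6, h8, hDf0 i j, mul_nonneg hK.le hItnn]
    have hDeb : ∀ i j, |e (s+t) i j - e' t i j| ≤ 2 * v 0 + 5*(K*It) := by
      intro i j
      by_cases hij : i = j
      · subst hij
        have := (hDuDiag i).2
        linarith [mul_nonneg hK.le hItnn]
      · have h1 := shift_e_off hsol hij hs ht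
        have h2 := hsol'.eq_e_off i j hij t ht
        have h3 : e (s+t) i j - e' t i j = (e s i j - e' 0 i j)
            - np.mu i j * (∫ ρ in (0:ℝ)..t, (e (s+ρ) i j - e' ρ i j))
            + Q i j * ∑ k, np.mu k i * ∫ ρ in (0:ℝ)..t, (f (s+ρ) k i - f' ρ k i) := by
          rw [h1, h2, hintDe i j t ht]
          simp only [fun k => hintDf k i t ht, mul_sub, Finset.sum_sub_distrib]
          ring
        have h4 := habsi _ (hDe_cont i j) (fun ρ hρ => hev ρ i j) t ht le_rfl
        have h5 : |np.mu i j * ∫ ρ in (0:ℝ)..t, (e (s+ρ) i j - e' ρ i j)| ≤ K * It := by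
          rw [abs_mul, abs_of_pos (np.mu_pos i j)]
          exact mul_le_mul (hmu_le i j) h4 (abs_nonneg _) hK.le
        have h6 : |Q i j * ∑ k, np.mu k i * ∫ ρ in (0:ℝ)..t, (f (s+ρ) k i - f' ρ k i)|
            ≤ K * It := by
          rw [abs_mul, abs_of_nonneg (hQ.1 i j)]
          have h7 : |∑ k, np.mu k i * ∫ ρ in (0:ℝ)..t, (f (s+ρ) k i - f' ρ k i)| ≤ K * It := by
            calc _ ≤ ∑ k, |np.mu k i * ∫ ρ in (0:ℝ)..t, (f (s+ρ) k i - f' ρ k i)| :=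
                  Finset.abs_sum_le_sum_abs _ _
              _ ≤ ∑ k, np.mu k i * It := by
                  apply Finset.sum_le_sum
                  intro k _
                  rw [abs_mul, abs_of_pos (np.mu_pos k i)]
                  exact mul_le_mul_of_nonneg_left
                    (habsi _ (hDf_cont k i) (fun ρ hρ => hfv ρ k i) t ht le_rfl)
                    (np.mu_pos k i).le
              _ = (∑ k, np.mu k i) * It := by rw [Finset.sum_mul]
              _ ≤ K * It := mul_le_mul_of_nonneg_right (hcol i) hItnn
          have h7b := mul_le_mul_of_nonneg_right (hQ1 i j)
            (abs_nonneg (∑ k, np.mu k i * ∫ ρ in (0:ℝ)..t, (f (s+ρ) k i - f' ρ k i)))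
          linarith
        have h9 : |(e s i j - e' 0 i j)
            - np.mu i j * (∫ ρ in (0:ℝ)..t, (e (s+ρ) i j - e' ρ i j))
            + Q i j * ∑ k, np.mu k i * ∫ ρ in (0:ℝ)..t, (f (s+ρ) k i - f' ρ k i)|
            ≤ |e s i j - e' 0 i j|
            + |np.mu i j * ∫ ρ in (0:ℝ)..t, (e (s+ρ) i j - e' ρ i j)|
            + |Q i j * ∑ k, np.mu k i * ∫ ρ in (0:ℝ)..t, (f (s+ρ) k i - f' ρ k i)| := by
          have := habc (e s i j - e' 0 i j)
            (np.mu i j * ∫ ρ in (0:ℝ)..t, (e (s+ρ) i j - e' ρ i j))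
            (-(Q i j * ∑ k, np.mu k i * ∫ ρ in (0:ℝ)..t, (f (s+ρ) k i - f' ρ k i)))
          rw [abs_neg] at this
          calc _ = |(e s i j - e' 0 i j)
              - np.mu i j * (∫ ρ in (0:ℝ)..t, (e (s+ρ) i j - e' ρ i j))
              - -(Q i j * ∑ k, np.mu k i * ∫ ρ in (0:ℝ)..t, (f (s+ρ) k i - f' ρ k i))| := by
                rw [sub_neg_eq_add]
            _ ≤ _ := this
        rw [h3]
        linarith [h5, h6, h9, hDe0 i j, mul_nonneg hK.le hItnn]
    -- summation
    have hsum1 : (∑ i, ∑ j, |f (s+t) i j - f' t i j|) ≤ (r:ℝ)^2 * (2 * v 0 + 5*(K*It)) := by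
      calc (∑ i, ∑ j, |f (s+t) i j - f' t i j|)
          ≤ ∑ i : Fin r, ∑ j : Fin r, (2 * v 0 + 5*(K*It)) :=
            Finset.sum_le_sum fun i _ => Finset.sum_le_sum fun j _ => hDfb i j
        _ = (r:ℝ)^2 * (2 * v 0 + 5*(K*It)) := by
            simp [Finset.sum_const, Finset.card_univ]
            ring
    have hsum2 : (∑ i, ∑ j, |e (s+t) i j - e' t i j|) ≤ (r:ℝ)^2 * (2 * v 0 + 5*(K*It)) := by
      calc (∑ i, ∑ j, |e (s+t) i j - e' t i j|)
          ≤ ∑ i : Fin r, ∑ j : Fin r, (2 * v 0 + 5*(K*It)) :=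
            Finset.sum_le_sum fun i _ => Finset.sum_le_sum fun j _ => hDeb i j
        _ = (r:ℝ)^2 * (2 * v 0 + 5*(K*It)) := by
            simp [Finset.sum_const, Finset.card_univ]
            ring
    have hrpos : (0:ℝ) < (r:ℝ)^2 := by
      have : (0:ℝ) < (r:ℝ) := by exact_mod_cast hr
      positivity
    have hvt : v t = (∑ i, ∑ j, |f (s+t) i j - f' t i j|)
        + ∑ i, ∑ j, |e (s+t) i j - e' t i j| := rfl
    have hv0t : v 0 = (∑ i, ∑ j, |f (s+0) i j - f' 0 i j|)
        + ∑ i, ∑ j, |e (s+0) i j - e' 0 i j| := rfl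
    linarith [hsum1, hsum2, hItnn, hvt]
  have hgron := gron hv_cont hv0
    (mul_nonneg (by positivity) hv00)
    (by linarith [mul_nonneg (mul_nonneg (by norm_num : (0:ℝ) ≤ 10) hK.le) (sq_nonneg (r:ℝ))] :
      (0:ℝ) < 10*K*(r:ℝ)^2+1) hmain
  intro t ht
  have h := hgron t ht
  have hzero : v 0 = (∑ i, ∑ j, |f s i j - f' 0 i j|) + ∑ i, ∑ j, |e s i j - e' 0 i j| := by
    show (∑ i, ∑ j, |f (s+0) i j - f' 0 i j|) + (∑ i, ∑ j, |e (s+0) i j - e' 0 i j|) = _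
    rw [add_zero]
  rw [hzero] at h
  exact h
end Key

lemma entry_le_sum {r : ℕ} (g : Mat r) (i j : Fin r) : |g i j| ≤ ∑ i', ∑ j', |g i' j'| :=
  calc |g i j| ≤ ∑ j', |g i j'| :=
      Finset.single_le_sum (f := fun j' => |g i j'|) (fun k _ => abs_nonneg _) (Finset.mem_univ j)
    _ ≤ ∑ i', ∑ j', |g i' j'| := Finset.single_le_sum (f := fun i' => ∑ j', |g i' j'|)
      (fun k _ => Finset.sum_nonneg fun l _ => abs_nonneg _) (Finset.mem_univ i)

lemma dist_le_sums {r : ℕ} (a b c d : Mat r) :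
    dist ((a, b) : Mat r × Mat r) (c, d) ≤
      (∑ i, ∑ j, |b i j - d i j|) + ∑ i, ∑ j, |a i j - c i j| := by
  have h1 : (0:ℝ) ≤ ∑ i, ∑ j, |b i j - d i j| :=
    Finset.sum_nonneg fun i _ => Finset.sum_nonneg fun j _ => abs_nonneg _
  have h2 : (0:ℝ) ≤ ∑ i, ∑ j, |a i j - c i j| :=
    Finset.sum_nonneg fun i _ => Finset.sum_nonneg fun j _ => abs_nonneg _
  rw [Prod.dist_eq]
  apply max_le
  · rw [dist_pi_le_iff (by linarith)]
    intro i
    rw [dist_pi_le_iff (by linarith)]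
    intro j
    rw [Real.dist_eq]
    have := entry_le_sum (fun i j => a i j - c i j) i j
    simpa using by linarith [this]
  · rw [dist_pi_le_iff (by linarith)]
    intro i
    rw [dist_pi_le_iff (by linarith)]
    intro j
    rw [Real.dist_eq]
    have := entry_le_sum (fun i j => b i j - d i j) i j
    simpa using by linarith [this]

lemma sums_le_dist {r : ℕ} (a b c d : Mat r) :
    (∑ i, ∑ j, |b i j - d i j|) + (∑ i, ∑ j, |a i j - c i j|) ≤
      2 * (r:ℝ)^2 * dist ((a, b) : Mat r × Mat r) (c, d) := by
  have hb : ∀ i j : Fin r, |b i j - d i j| ≤ dist ((a, b) : Mat r × Mat r) (c, d) := by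
    intro i j
    calc |b i j - d i j| = dist (b i j) (d i j) := (Real.dist_eq _ _).symm
      _ ≤ dist (b i) (d i) := dist_le_pi_dist (b i) (d i) j
      _ ≤ dist b d := dist_le_pi_dist b d i
      _ ≤ _ := by rw [Prod.dist_eq]; exact le_max_right _ _
  have ha : ∀ i j : Fin r, |a i j - c i j| ≤ dist ((a, b) : Mat r × Mat r) (c, d) := by
    intro i j
    calc |a i j - c i j| = dist (a i j) (c i j) := (Real.dist_eq _ _).symm
      _ ≤ dist (a i) (c i) := dist_le_pi_dist (a i) (c i) j
      _ ≤ dist a c := dist_le_pi_dist a c i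
      _ ≤ _ := by rw [Prod.dist_eq]; exact le_max_left _ _
  have h1 : (∑ i, ∑ j, |b i j - d i j|) ≤ (r:ℝ)^2 * dist ((a, b) : Mat r × Mat r) (c, d) := by
    calc (∑ i, ∑ j, |b i j - d i j|) ≤
        ∑ _i : Fin r, ∑ _j : Fin r, dist ((a, b) : Mat r × Mat r) (c, d) :=
          Finset.sum_le_sum fun i _ => Finset.sum_le_sum fun j _ => hb i j
      _ = (r:ℝ)^2 * dist ((a, b) : Mat r × Mat r) (c, d) := by
          simp [Finset.sum_const, Finset.card_univ]; ring
  have h2 : (∑ i, ∑ j, |a i j - c i j|) ≤ (r:ℝ)^2 * dist ((a, b) : Mat r × Mat r) (c, d) := by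
    calc (∑ i, ∑ j, |a i j - c i j|) ≤
        ∑ _i : Fin r, ∑ _j : Fin r, dist ((a, b) : Mat r × Mat r) (c, d) :=
          Finset.sum_le_sum fun i _ => Finset.sum_le_sum fun j _ => ha i j
      _ = (r:ℝ)^2 * dist ((a, b) : Mat r × Mat r) (c, d) := by
          simp [Finset.sum_const, Finset.card_univ]; ring
  linarith

end Helpers

theorem stmt_14 {r : ℕ} (hr : 1 ≤ r) (np : NetParams r)
    (Q : Mat r) (hQ : IsRouting Q)
    (e f : ℝ → Mat r) (u : ℝ → Fin r → ℝ)
    (hsol : IsFluidSol np Q e f u) :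
    (posLimitSet e f).Nonempty ∧
    IsCompact (posLimitSet e f) ∧
    (∀ (e' f' : ℝ → Mat r) (u' : ℝ → Fin r → ℝ),
      IsFluidSol np Q e' f' u' → (e' 0, f' 0) ∈ posLimitSet e f →
      ∀ t, 0 ≤ t → (e' t, f' t) ∈ posLimitSet e f) ∧
    Tendsto (fun t => Metric.infDist (e t, f t) (posLimitSet e f)) atTop (𝓝 0) := by
  set γ : ℝ → Mat r × Mat r := fun t => (e t, f t) with hγ
  set S : Set (Mat r × Mat r) :=
    (Set.univ.pi fun _ => Set.univ.pi fun _ => Set.Icc (0:ℝ) 1) ×ˢ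
    (Set.univ.pi fun _ => Set.univ.pi fun _ => Set.Icc (0:ℝ) 1) with hS
  have hSc : IsCompact S :=
    (isCompact_univ_pi fun _ => isCompact_univ_pi fun _ => isCompact_Icc).prod
    (isCompact_univ_pi fun _ => isCompact_univ_pi fun _ => isCompact_Icc)
  have hγS : ∀ t : ℝ, 0 ≤ t → γ t ∈ S := by
    intro t ht
    obtain ⟨he, hf, -⟩ := hsol.mem_T t ht
    exact ⟨fun i _ => fun j _ => he i j, fun i _ => fun j _ => hf i j⟩
  set L := posLimitSet e f with hL
  -- nonempty
  have hne : L.Nonempty := by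
    obtain ⟨a, haS, φ, hφ, hconv⟩ :=
      hSc.tendsto_subseq (x := fun n : ℕ => γ (n : ℝ)) (fun n => hγS _ (Nat.cast_nonneg n))
    refine ⟨a, fun n => ((φ n : ℕ) : ℝ), ?_, ?_⟩
    · exact tendsto_natCast_atTop_atTop.comp hφ.tendsto_atTop
    · exact hconv
  -- characterization as intersection of closures
  have hLeq : L = ⋂ n : ℕ, closure (γ '' Set.Ici (n:ℝ)) := by
    apply Set.Subset.antisymm
    · rintro p ⟨tn, htn, hc⟩
      rw [Set.mem_iInter]
      intro n
      apply mem_closure_of_tendsto hc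
      exact (htn.eventually_ge_atTop (n:ℝ)).mono fun m hm => ⟨tn m, hm, rfl⟩
    · intro p hp
      rw [Set.mem_iInter] at hp
      have hex : ∀ n : ℕ, ∃ τ : ℝ, (n:ℝ) ≤ τ ∧ dist p (γ τ) < 1/(n+1) := by
        intro n
        obtain ⟨q, hq, hd⟩ := Metric.mem_closure_iff.1 (hp n) (1/(n+1)) (by positivity)
        obtain ⟨τ, hτ, rfl⟩ := hq
        exact ⟨τ, hτ, hd⟩
      choose τ hτ hd using hex
      refine ⟨τ, tendsto_atTop_mono hτ tendsto_natCast_atTop_atTop, ?_⟩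
      rw [tendsto_iff_dist_tendsto_zero]
      apply squeeze_zero (fun n => dist_nonneg)
        (g := fun n : ℕ => 1/((n:ℝ)+1)) (fun n => by rw [dist_comm]; exact (hd n).le)
      exact tendsto_one_div_add_atTop_nhds_zero_nat
  have hclosed : IsClosed L := by
    rw [hLeq]; exact isClosed_iInter fun n => isClosed_closure
  have hLS : L ⊆ S := by
    intro p hp
    rw [hLeq] at hp
    have h0 := Set.mem_iInter.1 hp 0
    have himg : γ '' Set.Ici ((0:ℕ):ℝ) ⊆ S := by
      rintro q ⟨τ, hτ, rfl⟩
      exact hγS τ (by exact_mod_cast hτ)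
    have h2 : p ∈ closure S := closure_mono himg h0
    rwa [hSc.isClosed.closure_eq] at h2
  have hcompact : IsCompact L := hSc.of_isClosed_subset hclosed hLS
  -- invariance
  have hinv : ∀ (e' f' : ℝ → Mat r) (u' : ℝ → Fin r → ℝ),
      IsFluidSol np Q e' f' u' → (e' 0, f' 0) ∈ L →
      ∀ t, 0 ≤ t → (e' t, f' t) ∈ L := by
    intro e' f' u' hsol' hp t ht
    obtain ⟨tn, htn, hconv⟩ := hp
    refine ⟨fun n => tn n + t, tendsto_atTop_add_const_right _ t htn, ?_⟩
    rw [tendsto_iff_dist_tendsto_zero]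
    set C : ℝ := 4*(r:ℝ)^2 * (2*(r:ℝ)^2) *
      Real.exp ((10 * (∑ i, ∑ j, np.mu i j) * (r:ℝ)^2 + 1) * t) with hC
    have hdist0 : Tendsto (fun n => dist (γ (tn n)) (e' 0, f' 0)) atTop (𝓝 0) :=
      tendsto_iff_dist_tendsto_zero.1 hconv
    have hCconv : Tendsto (fun n => C * dist (γ (tn n)) (e' 0, f' 0)) atTop (𝓝 0) := by
      have := hdist0.const_mul C
      simpa using this
    apply squeeze_zero' (Eventually.of_forall fun n => dist_nonneg) ?_ hCconv
    filter_upwards [htn.eventually_ge_atTop 0] with n hn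
    have hkey := key hr hQ hsol hsol' hn t ht
    calc dist (e (tn n + t), f (tn n + t)) (e' t, f' t)
        ≤ (∑ i, ∑ j, |f (tn n + t) i j - f' t i j|)
          + ∑ i, ∑ j, |e (tn n + t) i j - e' t i j| := dist_le_sums _ _ _ _
      _ ≤ (4*(r:ℝ)^2 * ((∑ i, ∑ j, |f (tn n) i j - f' 0 i j|)
            + (∑ i, ∑ j, |e (tn n) i j - e' 0 i j|))) *
          Real.exp ((10 * (∑ i, ∑ j, np.mu i j) * (r:ℝ)^2 + 1) * t) := hkey
      _ ≤ C * dist (γ (tn n)) (e' 0, f' 0) := by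
          rw [hC]
          have h1 := sums_le_dist (e (tn n)) (f (tn n)) (e' 0) (f' 0)
          have h2 : (0:ℝ) ≤ Real.exp ((10 * (∑ i, ∑ j, np.mu i j) * (r:ℝ)^2 + 1) * t) :=
            (Real.exp_pos _).le
          have h3 : (0:ℝ) ≤ 4*(r:ℝ)^2 := by positivity
          nlinarith [mul_le_mul_of_nonneg_left h1 (mul_nonneg h3 h2)]
  -- convergence to L
  have hconvL : Tendsto (fun t => Metric.infDist (γ t) L) atTop (𝓝 0) := by
    by_contra hnot
    rw [Metric.tendsto_atTop] at hnot
    push_neg at hnot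
    obtain ⟨ε, hε, hbad⟩ := hnot
    have hex : ∀ n : ℕ, ∃ τ : ℝ, (n:ℝ) ≤ τ ∧ ε ≤ Metric.infDist (γ τ) L := by
      intro n
      obtain ⟨τ, hτ, hge⟩ := hbad (n:ℝ)
      refine ⟨τ, hτ, ?_⟩
      rw [Real.dist_eq, sub_zero, abs_of_nonneg Metric.infDist_nonneg] at hge
      exact hge
    choose τ hτ hdge using hex
    obtain ⟨a, haS, φ, hφ, hconv⟩ := hSc.tendsto_subseq (x := fun n => γ (τ n))
      (fun n => hγS _ (le_trans (Nat.cast_nonneg n) (hτ n)))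
    have haL : a ∈ L := by
      refine ⟨fun n => τ (φ n), ?_, hconv⟩
      apply tendsto_atTop_mono (fun n => hτ (φ n))
      apply tendsto_atTop_mono (f := fun n : ℕ => ((n:ℕ):ℝ))
        (fun n => by
          have h := hφ.id_le n
          simp only [id] at h
          show ((n:ℕ):ℝ) ≤ ((φ n : ℕ):ℝ)
          exact_mod_cast h)
      exact tendsto_natCast_atTop_atTop
    have htendsto : Tendsto (fun n => Metric.infDist (γ (τ (φ n))) L) atTop
        (𝓝 (Metric.infDist a L)) :=
      ((Metric.continuous_infDist_pt L).continuousAt.tendsto).comp hconv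
    have hge : ε ≤ Metric.infDist a L :=
      ge_of_tendsto htendsto (Eventually.of_forall fun n => hdge (φ n))
    rw [Metric.infDist_zero_of_mem haL] at hge
    linarith
  exact ⟨hne, hcompact, hinv, hconvL⟩
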